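/- Let β^{(2n)} be extremal, i.e., r := rank M(n) equals v := card V where V = {w_1,...,w_r} is the (finite) variety of M(n), and let B = {p_1(X),...,p_r(X)} be a basis of the column space of M(n) with p_i ∈ P_n. Then the following are equivalent: (i) every p ∈ P_n vanishing identically on V satisfies M(n) p̂ = 0; (ii) for every column-space basis B, the r × r matrix V_B = (p_i(w_j)) is invertible; (iii) for some column-space basis B, the matrix V_B is invertible. -/

import Mathlib

open MvPolynomial

/-- Lemma 3.1: for extremal `β` (rank `M(n)` = card `V` = `r`), injectivity of the
restriction map `p(X) ↦ p|_V` is equivalent to invertibility of `V_B = (pᵢ(w_j))`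
for every (equivalently, for some) column-space basis `B = {p₁(X),…,p_r(X)}`. -/
theorem stmt7 (d n r : ℕ) (Λ : MvPolynomial (Fin d) ℝ →ₗ[ℝ] ℝ)
    (T : MvPolynomial.restrictTotalDegree (Fin d) ℝ n →ₗ[ℝ]
      (MvPolynomial.restrictTotalDegree (Fin d) ℝ n →ₗ[ℝ] ℝ))
    (hT : ∀ p q : MvPolynomial.restrictTotalDegree (Fin d) ℝ n,
      T p q = Λ ((p : MvPolynomial (Fin d) ℝ) * (q : MvPolynomial (Fin d) ℝ)))
    (w : Fin r → (Fin d → ℝ)) (hw : Function.Injective w)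
    (V : Set (Fin d → ℝ)) (hVw : V = Set.range w)
    (hV : V = {x | ∀ p : MvPolynomial.restrictTotalDegree (Fin d) ℝ n,
      T p = 0 → MvPolynomial.eval x (p : MvPolynomial (Fin d) ℝ) = 0})
    (hrank : Module.finrank ℝ (LinearMap.range T) = r) :
    ((∀ p : MvPolynomial.restrictTotalDegree (Fin d) ℝ n,
        (∀ x ∈ V, MvPolynomial.eval x (p : MvPolynomial (Fin d) ℝ) = 0) → T p = 0) ↔
      (∀ p : Fin r → MvPolynomial.restrictTotalDegree (Fin d) ℝ n,
        (LinearIndependent ℝ (fun i => T (p i)) ∧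
          Submodule.span ℝ (Set.range fun i => T (p i)) = LinearMap.range T) →
        (Matrix.of fun i j =>
          MvPolynomial.eval (w j) ((p i : MvPolynomial (Fin d) ℝ))).det ≠ 0)) ∧
    ((∀ p : Fin r → MvPolynomial.restrictTotalDegree (Fin d) ℝ n,
        (LinearIndependent ℝ (fun i => T (p i)) ∧
          Submodule.span ℝ (Set.range fun i => T (p i)) = LinearMap.range T) →
        (Matrix.of fun i j =>
          MvPolynomial.eval (w j) ((p i : MvPolynomial (Fin d) ℝ))).det ≠ 0) ↔
      (∃ p : Fin r → MvPolynomial.restrictTotalDegree (Fin d) ℝ n,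
        (LinearIndependent ℝ (fun i => T (p i)) ∧
          Submodule.span ℝ (Set.range fun i => T (p i)) = LinearMap.range T) ∧
        (Matrix.of fun i j =>
          MvPolynomial.eval (w j) ((p i : MvPolynomial (Fin d) ℝ))).det ≠ 0)) := by
  classical
  haveI : FiniteDimensional ℝ (MvPolynomial.restrictTotalDegree (Fin d) ℝ n) := inferInstance
  -- the evaluation map at the points w
  let E : MvPolynomial.restrictTotalDegree (Fin d) ℝ n →ₗ[ℝ] (Fin r → ℝ) :=
    LinearMap.pi fun j => (MvPolynomial.aeval (w j)).toLinearMap ∘ₗ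
      (MvPolynomial.restrictTotalDegree (Fin d) ℝ n).subtype
  have hE : ∀ (p : MvPolynomial.restrictTotalDegree (Fin d) ℝ n) (j : Fin r),
      E p j = MvPolynomial.eval (w j) (p : MvPolynomial (Fin d) ℝ) := by
    intro p j
    show ((MvPolynomial.aeval (w j)).toLinearMap ∘ₗ
      (MvPolynomial.restrictTotalDegree (Fin d) ℝ n).subtype) p = _
    simp only [LinearMap.comp_apply, Submodule.subtype_apply, AlgHom.toLinearMap_apply,
      aeval_def, eval]
    rw [Algebra.algebraMap_self]
    rfl
  -- ker T ≤ ker E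
  have hkerTE : LinearMap.ker T ≤ LinearMap.ker E := by
    intro p hp
    rw [LinearMap.mem_ker] at hp ⊢
    funext j
    have hwj : w j ∈ V := by rw [hVw]; exact ⟨j, rfl⟩
    rw [hV] at hwj
    simpa [hE] using hwj p hp
  -- rank-nullity for T
  have hkerT : Module.finrank ℝ (LinearMap.ker T) + r =
      Module.finrank ℝ (MvPolynomial.restrictTotalDegree (Fin d) ℝ n) := by
    rw [← hrank, add_comm]
    exact LinearMap.finrank_range_add_finrank_ker T
  have hAB : (∀ p : MvPolynomial.restrictTotalDegree (Fin d) ℝ n,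
        (∀ x ∈ V, MvPolynomial.eval x (p : MvPolynomial (Fin d) ℝ) = 0) → T p = 0) →
      (∀ p : Fin r → MvPolynomial.restrictTotalDegree (Fin d) ℝ n,
        (LinearIndependent ℝ (fun i => T (p i)) ∧
          Submodule.span ℝ (Set.range fun i => T (p i)) = LinearMap.range T) →
        (Matrix.of fun i j =>
          MvPolynomial.eval (w j) ((p i : MvPolynomial (Fin d) ℝ))).det ≠ 0) := by
    intro hA' p hbasis
    obtain ⟨hli, -⟩ := hbasis
    set M : Matrix (Fin r) (Fin r) ℝ :=
      Matrix.of fun i j => MvPolynomial.eval (w j) ((p i : MvPolynomial (Fin d) ℝ)) with hM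
    have hrow : ∀ i, M i = E (p i) := by
      intro i; funext j; rw [hE]; rfl
    have hliM : LinearIndependent ℝ (fun i => M i) := by
      rw [Fintype.linearIndependent_iff]
      intro c hc i
      have hc' : E (∑ i, c i • p i) = 0 := by
        rw [map_sum]
        simp only [map_smul]
        simpa [hrow] using hc
      have hz : T (∑ i, c i • p i) = 0 := by
        apply hA'
        intro x hx
        rw [hVw] at hx
        obtain ⟨j, rfl⟩ := hx
        have := congrFun hc' j
        rwa [hE] at this
      have hsum : ∑ i, c i • T (p i) = 0 := by
        rw [← hz]; simp [map_sum, map_smul]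
      exact Fintype.linearIndependent_iff.mp hli c hsum i
    have h1 : IsUnit M := Matrix.linearIndependent_rows_iff_isUnit.mp hliM
    exact isUnit_iff_ne_zero.mp ((Matrix.isUnit_iff_isUnit_det M).mp h1)
  have hBC : (∀ p : Fin r → MvPolynomial.restrictTotalDegree (Fin d) ℝ n,
        (LinearIndependent ℝ (fun i => T (p i)) ∧
          Submodule.span ℝ (Set.range fun i => T (p i)) = LinearMap.range T) →
        (Matrix.of fun i j =>
          MvPolynomial.eval (w j) ((p i : MvPolynomial (Fin d) ℝ))).det ≠ 0) →
      (∃ p : Fin r → MvPolynomial.restrictTotalDegree (Fin d) ℝ n,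
        (LinearIndependent ℝ (fun i => T (p i)) ∧
          Submodule.span ℝ (Set.range fun i => T (p i)) = LinearMap.range T) ∧
        (Matrix.of fun i j =>
          MvPolynomial.eval (w j) ((p i : MvPolynomial (Fin d) ℝ))).det ≠ 0) := by
    intro hB'
    haveI : Module.Free ℝ (LinearMap.range T) :=
      @Module.Free.of_divisionRing ℝ (LinearMap.range T) _ _ _
    let b : Module.Basis (Fin r) ℝ (LinearMap.range T) := Module.finBasisOfFinrankEq ℝ _ hrank
    have hmem : ∀ i, ∃ x, T x =
        (b i : MvPolynomial.restrictTotalDegree (Fin d) ℝ n →ₗ[ℝ] ℝ) := fun i =>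
      LinearMap.mem_range.mp (b i).2
    choose p hp using hmem
    have hTp : (fun i => T (p i)) =
        fun i => ((b i : MvPolynomial.restrictTotalDegree (Fin d) ℝ n →ₗ[ℝ] ℝ)) :=
      funext hp
    have hli : LinearIndependent ℝ (fun i => T (p i)) := by
      rw [hTp]
      exact b.linearIndependent.map_injOn (LinearMap.range T).subtype
        (Subtype.val_injective.injOn)
    have hsp : Submodule.span ℝ (Set.range fun i => T (p i)) = LinearMap.range T := by
      rw [hTp]
      have himg : (Set.range fun i =>
          ((b i : MvPolynomial.restrictTotalDegree (Fin d) ℝ n →ₗ[ℝ] ℝ))) =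
          (LinearMap.range T).subtype '' (Set.range b) := by
        rw [← Set.range_comp]; rfl
      rw [himg, ← Submodule.map_span, b.span_eq, Submodule.map_top,
        Submodule.range_subtype]
    exact ⟨p, ⟨hli, hsp⟩, hB' p ⟨hli, hsp⟩⟩
  have hCA : (∃ p : Fin r → MvPolynomial.restrictTotalDegree (Fin d) ℝ n,
        (LinearIndependent ℝ (fun i => T (p i)) ∧
          Submodule.span ℝ (Set.range fun i => T (p i)) = LinearMap.range T) ∧
        (Matrix.of fun i j =>
          MvPolynomial.eval (w j) ((p i : MvPolynomial (Fin d) ℝ))).det ≠ 0) →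
      (∀ p : MvPolynomial.restrictTotalDegree (Fin d) ℝ n,
        (∀ x ∈ V, MvPolynomial.eval x (p : MvPolynomial (Fin d) ℝ) = 0) → T p = 0) := by
    rintro ⟨p, -, hdet⟩
    set M : Matrix (Fin r) (Fin r) ℝ :=
      Matrix.of fun i j => MvPolynomial.eval (w j) ((p i : MvPolynomial (Fin d) ℝ)) with hM
    have hrow : ∀ i j, M i j = E (p i) j := by
      intro i j; rw [hE]; rfl
    -- E is surjective: every v is a combination of rows of M
    have hEsurj : LinearMap.range E = ⊤ := by
      rw [LinearMap.range_eq_top]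
      intro v
      refine ⟨∑ i, (Matrix.vecMul v M⁻¹) i • p i, ?_⟩
      funext j
      have hMinv : Matrix.vecMul (Matrix.vecMul v M⁻¹) M = v := by
        rw [Matrix.vecMul_vecMul, Matrix.nonsing_inv_mul M (isUnit_iff_ne_zero.mpr hdet),
          Matrix.vecMul_one]
      calc E (∑ i, (Matrix.vecMul v M⁻¹) i • p i) j
          = ∑ i, (Matrix.vecMul v M⁻¹) i * M i j := by
            rw [map_sum]
            simp only [map_smul]
            simp [hrow, Finset.sum_apply]
        _ = Matrix.vecMul (Matrix.vecMul v M⁻¹) M j := by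
            simp [Matrix.vecMul, dotProduct]
        _ = v j := by rw [hMinv]
    have hkerE : Module.finrank ℝ (LinearMap.ker E) + r =
        Module.finrank ℝ (MvPolynomial.restrictTotalDegree (Fin d) ℝ n) := by
      have h1 := LinearMap.finrank_range_add_finrank_ker E
      rw [hEsurj] at h1
      have h2 : Module.finrank ℝ (⊤ : Submodule ℝ (Fin r → ℝ)) = r := by simp
      rw [h2] at h1
      omega
    have hker_eq : LinearMap.ker T = LinearMap.ker E :=
      Submodule.eq_of_le_of_finrank_le hkerTE (by omega)
    intro q hq
    have hqE : E q = 0 := by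
      funext j
      rw [hE]
      exact hq (w j) (by rw [hVw]; exact ⟨j, rfl⟩)
    have hqk : q ∈ LinearMap.ker T := by
      rw [hker_eq, LinearMap.mem_ker]
      simpa using hqE
    exact LinearMap.mem_ker.mp hqk
  exact ⟨⟨hAB, fun h => hCA (hBC h)⟩, ⟨hBC, fun h => hAB (hCA h)⟩⟩
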